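/- Let ι be a finite nonempty type, let m ≥ 2, and for each i : ι let v i : Fin m → ℝ be a unit vector (Σ_k (v i k)^2 = 1) and H i a real symmetric n × n matrix (n ≥ 1) all of whose eigenvalues lie in the interval [−1, 1]. Consider the block-diagonal matrix T = blockDiagonal (fun i => (1/2) • (1 − (vecMulVec (v i) (v i)) ⊗ₖ (H i))). Then every H i is positive semidefinite if and only if the supremum of the spectrum of T equals 1/2. -/

import Mathlib

open Matrix Kronecker

lemma aux_mem_spectrum_iff {N : Type*} [Fintype N] [DecidableEq N]
    (M : Matrix N N ℝ) (μ : ℝ) :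
    μ ∈ spectrum ℝ M ↔ ∃ x, x ≠ 0 ∧ M.mulVec x = μ • x := by
  rw [spectrum.mem_iff, Matrix.isUnit_iff_isUnit_det, isUnit_iff_ne_zero, not_not,
    ← Matrix.exists_mulVec_eq_zero_iff]
  have halg : (algebraMap ℝ (Matrix N N ℝ)) μ = μ • (1 : Matrix N N ℝ) :=
    Algebra.algebraMap_eq_smul_one μ
  constructor
  · rintro ⟨x, hx, h⟩
    refine ⟨x, hx, ?_⟩
    rw [halg, Matrix.sub_mulVec, Matrix.smul_mulVec, Matrix.one_mulVec,
      sub_eq_zero] at h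
    exact h.symm
  · rintro ⟨x, hx, h⟩
    refine ⟨x, hx, ?_⟩
    rw [halg, Matrix.sub_mulVec, Matrix.smul_mulVec, Matrix.one_mulVec, h, sub_self]

lemma aux_blockDiagonal_mulVec {o p : Type*} [Fintype o] [Fintype p] [DecidableEq p]
    (M : p → Matrix o o ℝ) (x : o × p → ℝ) (a : o) (i : p) :
    (Matrix.blockDiagonal M).mulVec x (a, i) = (M i).mulVec (fun b => x (b, i)) a := by
  simp [Matrix.mulVec, dotProduct, Fintype.sum_prod_type,
    Matrix.blockDiagonal_apply, ite_mul, zero_mul, Finset.sum_ite_eq]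

lemma aux_kron_mulVec {m n : ℕ} (v w : Fin m → ℝ) (Hm : Matrix (Fin n) (Fin n) ℝ)
    (y : Fin n → ℝ) (z : Fin m × Fin n → ℝ) (hzdef : ∀ c d, z (c, d) = w c * y d)
    (a : Fin m) (b : Fin n) :
    ((vecMulVec v v ⊗ₖ Hm).mulVec z) (a, b)
      = (∑ c, v c * w c) * (v a * (Hm.mulVec y b)) := by
  simp only [Matrix.mulVec, dotProduct, Fintype.sum_prod_type,
    Matrix.kroneckerMap_apply, Matrix.vecMulVec_apply]
  calc ∑ c, ∑ d, (v a * v c) * Hm b d * z (c, d)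
      = ∑ c, ∑ d, (v c * w c) * (v a * (Hm b d * y d)) := by
        refine Finset.sum_congr rfl fun c _ => Finset.sum_congr rfl fun d _ => by
          rw [hzdef]; ring
    _ = (∑ c, v c * w c) * (v a * ∑ d, Hm b d * y d) := by
        simp only [← Finset.mul_sum, ← Finset.sum_mul]

lemma aux_kron_posSemidef {m n : ℕ} (v : Fin m → ℝ) {Hm : Matrix (Fin n) (Fin n) ℝ}
    (h : Hm.PosSemidef) : ((vecMulVec v v) ⊗ₖ Hm).PosSemidef := by
  open scoped MatrixOrder in
  obtain ⟨B, rfl⟩ := CStarAlgebra.nonneg_iff_eq_star_mul_self.mp h.nonneg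
  rw [Matrix.star_eq_conjTranspose]
  have hv : vecMulVec v v = (replicateRow Unit v)ᴴ * replicateRow Unit v := by
    rw [Matrix.conjTranspose_replicateRow]
    simp [Matrix.vecMulVec_eq Unit]
  rw [hv, Matrix.mul_kronecker_mul]
  have hct : (replicateRow Unit v)ᴴ ⊗ₖ Bᴴ = (replicateRow Unit v ⊗ₖ B)ᴴ := by
    simp only [Matrix.conjTranspose_eq_transpose_of_trivial]
    exact Matrix.kroneckerMap_transpose _ _ _
  rw [hct]
  exact Matrix.posSemidef_conjTranspose_mul_self _

theorem convexity_test_criterion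
    (ι : Type*) [Fintype ι] [DecidableEq ι] [Nonempty ι]
    (m n : ℕ) (hm : 2 ≤ m) (hn : 1 ≤ n)
    (v : ι → (Fin m → ℝ)) (hv : ∀ i, ∑ k : Fin m, (v i k) ^ 2 = 1)
    (H : ι → Matrix (Fin n) (Fin n) ℝ) (hH : ∀ i, (H i)ᵀ = H i)
    (hspec : ∀ i, ∀ μ ∈ spectrum ℝ (H i), μ ∈ Set.Icc (-1 : ℝ) 1)
    (T : Matrix ((Fin m × Fin n) × ι) ((Fin m × Fin n) × ι) ℝ)
    (hT : T = Matrix.blockDiagonal (fun i =>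
      ((1 : ℝ) / 2) • ((1 : Matrix (Fin m × Fin n) (Fin m × Fin n) ℝ) -
        (vecMulVec (v i) (v i)) ⊗ₖ (H i)))) :
    (∀ i, (H i).PosSemidef) ↔ sSup (spectrum ℝ T) = 1 / 2 := by
  classical
  have hvne : ∀ i, ∃ k, v i k ≠ 0 := by
    intro i
    by_contra h
    push_neg at h
    have h1 := hv i
    simp [h] at h1
  -- eigenvalue transfer lemma
  have key : ∀ (i : ι) (c : ℝ) (z : Fin m × Fin n → ℝ), z ≠ 0 →
      ((vecMulVec (v i) (v i)) ⊗ₖ (H i)).mulVec z = c • z →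
      ((1 - c)/2) ∈ spectrum ℝ T := by
    intro i c z hz hKz
    rw [aux_mem_spectrum_iff]
    refine ⟨fun p => if p.2 = i then z p.1 else 0, ?_, ?_⟩
    · intro h
      apply hz
      funext q
      have h1 := congr_fun h (q, i)
      simpa using h1
    · funext p
      obtain ⟨q, j⟩ := p
      rw [hT, aux_blockDiagonal_mulVec]
      by_cases hj : j = i
      · subst hj
        simp only [eq_self_iff_true, if_true]
        rw [Matrix.smul_mulVec, Matrix.sub_mulVec, Matrix.one_mulVec, hKz]
        simp only [Pi.smul_apply, Pi.sub_apply, smul_eq_mul, eq_self_iff_true, if_true]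
        ring
      · simp [Matrix.mulVec, dotProduct, hj]
  -- the spectrum is bounded above (used via csSup)
  have hbdd : BddAbove (spectrum ℝ T) := (Matrix.finite_spectrum T).bddAbove
  constructor
  · intro hPSD
    -- 1/2 is in the spectrum
    have i0 : ι := Classical.arbitrary ι
    obtain ⟨k0, hk0⟩ := hvne i0
    obtain ⟨k1, hk1⟩ : ∃ k1 : Fin m, k1 ≠ k0 :=
      Fintype.exists_ne_of_one_lt_card (by rw [Fintype.card_fin]; omega) k0
    set u : Fin m → ℝ := Pi.single k1 (v i0 k0) - Pi.single k0 (v i0 k1) with hu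
    have hudot : ∑ c, v i0 c * u c = 0 := by
      have h1 : ∑ c, v i0 c * u c = v i0 ⬝ᵥ u := rfl
      rw [h1, hu, dotProduct_sub, dotProduct_single, dotProduct_single]
      ring
    have huk1 : u k1 = v i0 k0 := by
      simp [hu, Pi.single_eq_same, Pi.single_eq_of_ne hk1]
    have hhalf : (1/2 : ℝ) ∈ spectrum ℝ T := by
      have h0 := key i0 0 (fun q => u q.1) ?_ ?_
      · simpa using h0
      · intro h
        have h1 := congr_fun h (k1, ⟨0, hn⟩)
        simp [huk1] at h1
        exact hk0 h1
      · funext p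
        obtain ⟨a, b⟩ := p
        rw [aux_kron_mulVec (v i0) u (H i0) (fun _ => 1) _ (fun c d => (mul_one _).symm),
          hudot]
        simp
    have hub : ∀ μ ∈ spectrum ℝ T, μ ≤ 1/2 := by
      intro μ hμ
      obtain ⟨x, hx, hTx⟩ := (aux_mem_spectrum_iff T μ).mp hμ
      have hS : 0 < x ⬝ᵥ x := by
        have h0 : 0 ≤ x ⬝ᵥ x := Finset.sum_nonneg fun p _ => mul_self_nonneg _
        rcases h0.lt_or_eq with h | h
        · exact h
        · exact absurd (dotProduct_self_eq_zero.mp h.symm) hx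
      have hquad : x ⬝ᵥ T.mulVec x = μ * (x ⬝ᵥ x) := by
        rw [hTx, dotProduct_smul, smul_eq_mul]
      have hsum : x ⬝ᵥ T.mulVec x
          = ∑ j, (fun q => x (q, j)) ⬝ᵥ
              (((1:ℝ)/2) • (1 - (vecMulVec (v j) (v j)) ⊗ₖ (H j))).mulVec
                (fun q => x (q, j)) := by
        rw [show x ⬝ᵥ T.mulVec x
          = ∑ p : (Fin m × Fin n) × ι, x p * T.mulVec x p from rfl,
          Fintype.sum_prod_type]
        simp only [hT, aux_blockDiagonal_mulVec]
        rw [Finset.sum_comm]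
        rfl
      have hxx : ∑ j, (fun q => x (q, j)) ⬝ᵥ (fun q => x (q, j)) = x ⬝ᵥ x := by
        rw [show x ⬝ᵥ x = ∑ p : (Fin m × Fin n) × ι, x p * x p from rfl,
          Fintype.sum_prod_type, Finset.sum_comm]
        rfl
      have hblock : ∀ j, (fun q => x (q, j)) ⬝ᵥ
          (((1:ℝ)/2) • (1 - (vecMulVec (v j) (v j)) ⊗ₖ (H j))).mulVec (fun q => x (q, j))
          ≤ (1/2) * ((fun q => x (q, j)) ⬝ᵥ (fun q => x (q, j))) := by
        intro j
        have hKpsd := aux_kron_posSemidef (v j) (hPSD j)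
        have h0 : 0 ≤ (fun q => x (q, j)) ⬝ᵥ
            ((vecMulVec (v j) (v j)) ⊗ₖ (H j)).mulVec (fun q => x (q, j)) := by
          simpa using hKpsd.dotProduct_mulVec_nonneg (fun q => x (q, j))
        rw [Matrix.smul_mulVec, dotProduct_smul, Matrix.sub_mulVec,
          Matrix.one_mulVec, dotProduct_sub, smul_eq_mul]
        linarith
      have hfin : μ * (x ⬝ᵥ x) ≤ (1/2) * (x ⬝ᵥ x) := by
        calc μ * (x ⬝ᵥ x) = x ⬝ᵥ T.mulVec x := hquad.symm
          _ ≤ ∑ j, (1/2) * ((fun q => x (q, j)) ⬝ᵥ (fun q => x (q, j))) := by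
              rw [hsum]; exact Finset.sum_le_sum fun j _ => hblock j
          _ = (1/2) * (x ⬝ᵥ x) := by rw [← Finset.mul_sum, hxx]
      exact le_of_mul_le_mul_right (by linarith) hS
    exact le_antisymm (csSup_le ⟨1/2, hhalf⟩ hub) (le_csSup hbdd hhalf)
  · intro hsup i
    have hHerm : (H i).IsHermitian := by
      rw [Matrix.IsHermitian, Matrix.conjTranspose_eq_transpose_of_trivial]
      exact hH i
    apply (Matrix.IsHermitian.posSemidef_iff_eigenvalues_nonneg hHerm).mpr
    intro j
    show 0 ≤ hHerm.eigenvalues j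
    have hνspec : hHerm.eigenvalues j ∈ spectrum ℝ (H i) :=
      hHerm.eigenvalues_mem_spectrum_real j
    set ν := hHerm.eigenvalues j with hν
    obtain ⟨y, hy, hHy⟩ := (aux_mem_spectrum_iff (H i) ν).mp hνspec
    have hz : (fun q : Fin m × Fin n => v i q.1 * y q.2) ≠ 0 := by
      obtain ⟨k, hk⟩ := hvne i
      obtain ⟨b, hb⟩ : ∃ b, y b ≠ 0 := by
        by_contra h
        push_neg at h
        exact hy (funext h)
      intro h
      have h1 := congr_fun h (k, b)
      exact (mul_ne_zero hk hb) (by simpa using h1)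
    have hKz : ((vecMulVec (v i) (v i)) ⊗ₖ (H i)).mulVec
          (fun q : Fin m × Fin n => v i q.1 * y q.2)
        = ν • (fun q : Fin m × Fin n => v i q.1 * y q.2) := by
      funext p
      obtain ⟨a, b⟩ := p
      rw [aux_kron_mulVec (v i) (v i) (H i) y _ (fun c d => rfl)]
      have h1 : ∑ c, v i c * v i c = 1 := by
        simpa [sq] using hv i
      rw [h1, hHy]
      simp only [Pi.smul_apply, smul_eq_mul, one_mul]
      ring
    have hmem := key i ν _ hz hKz
    have hle : (1 - ν)/2 ≤ 1/2 := hsup ▸ le_csSup hbdd hmem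
    linarith
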